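/- Let P ⊂ ℝⁿ be a nonempty compact convex set and f a C¹, ρ-weakly convex function on P satisfying local μ-quadratic growth with level ζ > 0 at the minimizer x*, with ρ ≤ μ. If B(x*, r) ⊂ P for some r > 0, then for all x ∈ [f ≤ f* + ζ] ∩ P and v ∈ argmax_{u ∈ P}⟨∇f(x), x − u⟩, ⟨∇f(x), x − v⟩ ≥ r‖∇f(x)‖. -/

import Mathlib

open Set Metric
open scoped RealInnerProductSpace

/-- scaling inequality from weak convexity and local quadratic growth
when the minimizer is in the interior of `P`. -/
theorem scaling_inequality_weakly_convex {n : ℕ}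
    (P : Set (EuclideanSpace ℝ (Fin n)))
    (hP : IsCompact P) (hPconv : Convex ℝ P) (hPne : P.Nonempty)
    (f : EuclideanSpace ℝ (Fin n) → ℝ)
    (f' : EuclideanSpace ℝ (Fin n) → EuclideanSpace ℝ (Fin n))
    (hf' : ∀ x ∈ P, HasGradientAt f (f' x) x)
    (ρ μ ζ : ℝ) (hρ : 0 ≤ ρ) (hρμ : ρ ≤ μ) (hμ : 0 < μ) (hζ : 0 < ζ)
    (hweak : ∀ x ∈ P, ∀ y ∈ P, f y - f x ≥ ⟪f' x, y - x⟫ - (ρ / 2) * ‖y - x‖ ^ 2)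
    (xstar : EuclideanSpace ℝ (Fin n)) (hxstar : xstar ∈ P)
    (hmin : IsMinOn f P xstar)
    (hqg : ∀ x ∈ P, f x ≤ f xstar + ζ →
      ‖x - xstar‖ ^ 2 ≤ (2 / μ) * (f x - f xstar))
    (r : ℝ) (hr : 0 < r) (hball : closedBall xstar r ⊆ P) :
    ∀ x ∈ P, f x ≤ f xstar + ζ →
      ∀ v ∈ P, (∀ u ∈ P, ⟪f' x, x - u⟫ ≤ ⟪f' x, x - v⟫) →
        r * ‖f' x‖ ≤ ⟪f' x, x - v⟫ := by
  intro x hx hlev v hv hmax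
  set g := f' x with hg
  -- Step 1: ⟪g, x - xstar⟫ ≥ 0
  have hfx : f xstar ≤ f x := hmin hx
  have hqgx := hqg x hx hlev
  have hwc := hweak x hx xstar hxstar
  have hinner : (0:ℝ) ≤ ⟪g, x - xstar⟫ := by
    have h1 : ⟪g, xstar - x⟫ ≤ f xstar - f x + (ρ / 2) * ‖xstar - x‖ ^ 2 := by
      linarith [hwc]
    have hns : ‖xstar - x‖ = ‖x - xstar‖ := norm_sub_rev _ _
    have h2 : (ρ / 2) * ‖x - xstar‖ ^ 2 ≤ (ρ / 2) * ((2 / μ) * (f x - f xstar)) := by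
      apply mul_le_mul_of_nonneg_left hqgx (by linarith)
    have h3 : (ρ / 2) * ((2 / μ) * (f x - f xstar)) = (ρ / μ) * (f x - f xstar) := by
      field_simp
    have h4 : (ρ / μ) * (f x - f xstar) ≤ f x - f xstar := by
      have : ρ / μ ≤ 1 := (div_le_one hμ).mpr hρμ
      nlinarith
    have h5 : ⟪g, xstar - x⟫ ≤ 0 := by
      rw [hns] at h1; linarith
    have : ⟪g, xstar - x⟫ = - ⟪g, x - xstar⟫ := by
      rw [← inner_neg_right]; congr 1; abel
    linarith [this ▸ h5]
  -- Step 2: use test point u = xstar - (r/‖g‖) • g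
  rcases eq_or_ne g 0 with hg0 | hg0
  · have := hmax x hx
    simp only [sub_self, inner_zero_right] at this
    rw [hg0]; simp
  · have hgn : 0 < ‖g‖ := norm_pos_iff.mpr hg0
    set u := xstar - (r / ‖g‖) • g with hu
    have hu_mem : u ∈ P := by
      apply hball
      simp only [mem_closedBall, dist_eq_norm, hu]
      have : xstar - (r / ‖g‖) • g - xstar = -((r / ‖g‖) • g) := by abel
      rw [this, norm_neg, norm_smul, Real.norm_eq_abs,
        abs_of_pos (div_pos hr hgn), div_mul_cancel₀ _ (ne_of_gt hgn)]
    have key : ⟪g, x - u⟫ = ⟪g, x - xstar⟫ + r * ‖g‖ := by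
      have : x - u = (x - xstar) + (r / ‖g‖) • g := by rw [hu]; abel
      rw [this, inner_add_right, real_inner_smul_right,
        real_inner_self_eq_norm_sq]
      field_simp
    have := hmax u hu_mem
    rw [key] at this
    linarith
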